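/- Let Y and Σ be finite sets, and let M_1,…,M_t be symmetric bistochastic Y × Y matrices, each with strictly positive entries. There exists C > 0 such that the following holds for all n: given ψ : [n] → [t], let M_ψ be the distribution on pairs in Y^n × Y^n obtained by sampling the i-th coordinate pair independently according to M_{ψ(i)} (i.e., x_i from the stationary distribution μ(M_{ψ(i)}) and y_i with probability M_{ψ(i)}(x_i, y_i)), and let μ_ψ be the product distribution whose i-th factor is μ(M_{ψ(i)}). If a function f : Y^n → Σ satisfies Pr_{(x,y) ~ M_ψ}[f(x) ≠ f(y)] ≤ ε, then there exists σ ∈ Σ such that Pr_{x ~ μ_ψ}[f(x) ≠ σ] ≤ Cε. -/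

import Mathlib

open Finset

attribute [local instance 10] Classical.propDecidable


private lemma sum_rotate {X₁ X₂ ι : Type*} [Fintype X₁] [Fintype X₂] [Fintype ι]
    (f : X₁ → X₂ → ι → ℝ) :
    ∑ x, ∑ y, ∑ a, f x y a = ∑ a, ∑ x, ∑ y, f x y a :=
  calc ∑ x, ∑ y, ∑ a, f x y a
      = ∑ x, ∑ a, ∑ y, f x y a := Finset.sum_congr rfl fun x _ => Finset.sum_comm
    _ = ∑ a, ∑ x, ∑ y, f x y a := Finset.sum_comm

private lemma sum_pi_succ {Y : Type*} [Fintype Y] {n : ℕ} (F : (Fin (n+1) → Y) → ℝ) :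
    ∑ x, F x = ∑ a : Y, ∑ x' : Fin n → Y, F (Fin.cons a x') := by
  rw [← (Fin.consEquiv fun _ : Fin (n+1) => Y).sum_comp F, Fintype.sum_prod_type]
  rfl

private lemma sum_prod_pi {Y : Type*} [Fintype Y] {n : ℕ} (g : Fin n → Y → ℝ) :
    ∑ y : Fin n → Y, ∏ i, g i (y i) = ∏ i, ∑ b, g i b := by
  rw [Fintype.prod_sum]

private lemma single_gap {Y : Type*} [Fintype Y] [Nonempty Y] {α : ℝ} (N : Y → Y → ℝ)
    (hsym : ∀ a b, N a b = N b a) (hrow : ∀ a, ∑ b, N a b = 1)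
    (hlb : ∀ a b, α / (Fintype.card Y : ℝ) ≤ N a b)
    (v : Y → ℝ) (hv : ∑ a, v a = 0) :
    ∑ a, ∑ b, N a b * v a * v b ≤ (1 - α) * ∑ a, (v a) ^ 2 := by
  set c : ℝ := (Fintype.card Y : ℝ) with hcdef
  have hc : 0 < c := by rw [hcdef]; exact_mod_cast Fintype.card_pos
  set β : ℝ := α / c with hβ
  have hβsum : ∀ a : Y, ∑ _b : Y, β = α := by
    intro a
    rw [Finset.sum_const, Finset.card_univ, nsmul_eq_mul, hβ]
    field_simp
    rw [hcdef]; ring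
  have key : ∑ a, ∑ b, N a b * v a * v b = ∑ a, ∑ b, (N a b - β) * (v a * v b) := by
    simp only [sub_mul, Finset.sum_sub_distrib]
    have h0 : ∀ a : Y, ∑ b, β * (v a * v b) = 0 := by
      intro a
      rw [← Finset.mul_sum, ← Finset.mul_sum, hv, mul_zero, mul_zero]
    simp only [h0, Finset.sum_const_zero, sub_zero]
    refine Finset.sum_congr rfl fun a _ => Finset.sum_congr rfl fun b _ => by ring
  rw [key]
  have hcol : ∀ b, ∑ a, N a b = 1 := by
    intro b
    rw [Finset.sum_congr rfl fun a _ => hsym a b]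
    exact hrow b
  have step1 : ∑ a, ∑ b, (N a b - β) * (v a * v b)
      ≤ ∑ a, ∑ b, (N a b - β) * ((v a) ^ 2 / 2 + (v b) ^ 2 / 2) := by
    refine Finset.sum_le_sum fun a _ => Finset.sum_le_sum fun b _ => ?_
    have hnn : 0 ≤ N a b - β := by
      have := hlb a b; simp only [hβ]; linarith
    refine mul_le_mul_of_nonneg_left ?_ hnn
    nlinarith [sq_nonneg (v a - v b)]
  refine step1.trans (le_of_eq ?_)
  have expand : ∀ a b : Y, (N a b - β) * ((v a) ^ 2 / 2 + (v b) ^ 2 / 2)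
      = (N a b - β) * (v a) ^ 2 / 2 + (N a b - β) * (v b) ^ 2 / 2 := fun a b => by ring
  simp only [expand, Finset.sum_add_distrib]
  have t1 : ∀ a : Y, ∑ b, (N a b - β) * (v a) ^ 2 / 2 = (1 - α) * (v a) ^ 2 / 2 := by
    intro a
    have : ∑ b, (N a b - β) * (v a) ^ 2 / 2 = (∑ b, (N a b - β)) * ((v a) ^ 2 / 2) := by
      rw [Finset.sum_mul]
      exact Finset.sum_congr rfl fun b _ => by ring
    rw [this, Finset.sum_sub_distrib, hrow a, hβsum a]; ring
  have t2 : ∑ a, ∑ b, (N a b - β) * (v b) ^ 2 / 2 = ∑ a, (1 - α) * (v a) ^ 2 / 2 := by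
    rw [Finset.sum_comm]
    refine Finset.sum_congr rfl fun b _ => ?_
    have : ∑ a, (N a b - β) * (v b) ^ 2 / 2 = (∑ a, (N a b - β)) * ((v b) ^ 2 / 2) := by
      rw [Finset.sum_mul]
      exact Finset.sum_congr rfl fun a _ => by ring
    rw [this, Finset.sum_sub_distrib, hcol b, hβsum b]; ring
  simp only [t1, t2, ← Finset.sum_add_distrib]
  rw [Finset.mul_sum]
  exact Finset.sum_congr rfl fun a _ => by ring

/-- linearity of the bilinear form in the left argument -/
private lemma bilin_left {X ι : Type*} [Fintype X] [Fintype ι] (W : X → X → ℝ)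
    (φ : ι → ℝ) (P : ι → X → ℝ) (v : X → ℝ) :
    ∑ x, ∑ y, W x y * ((∑ a, φ a * P a x) * v y)
      = ∑ a, φ a * ∑ x, ∑ y, W x y * (P a x * v y) := by
  have : ∀ x y : X, W x y * ((∑ a, φ a * P a x) * v y)
      = ∑ a, W x y * ((φ a * P a x) * v y) := by
    intro x y
    rw [Finset.sum_mul, Finset.mul_sum]
  simp only [this]
  rw [sum_rotate]
  refine Finset.sum_congr rfl fun a _ => ?_
  rw [Finset.mul_sum]
  refine Finset.sum_congr rfl fun x _ => ?_
  rw [Finset.mul_sum]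
  exact Finset.sum_congr rfl fun y _ => by ring

private lemma bilin_right {X ι : Type*} [Fintype X] [Fintype ι] (W : X → X → ℝ)
    (ρ : ι → ℝ) (Q : ι → X → ℝ) (u : X → ℝ) :
    ∑ x, ∑ y, W x y * (u x * (∑ b, ρ b * Q b y))
      = ∑ b, ρ b * ∑ x, ∑ y, W x y * (u x * Q b y) := by
  have : ∀ x y : X, W x y * (u x * (∑ b, ρ b * Q b y))
      = ∑ b, W x y * (u x * (ρ b * Q b y)) := by
    intro x y
    rw [Finset.mul_sum, Finset.mul_sum]
  simp only [this]
  rw [sum_rotate]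
  refine Finset.sum_congr rfl fun b _ => ?_
  rw [Finset.mul_sum]
  refine Finset.sum_congr rfl fun x _ => ?_
  rw [Finset.mul_sum]
  exact Finset.sum_congr rfl fun y _ => by ring

/-- additivity of the bilinear form in both arguments -/
private lemma bilin_add {X : Type*} [Fintype X] (W : X → X → ℝ) (u u' v v' : X → ℝ) :
    ∑ x, ∑ y, W x y * ((u x + u' x) * (v y + v' y))
      = ∑ x, ∑ y, W x y * (u x * v y) + ∑ x, ∑ y, W x y * (u x * v' y)
        + ∑ x, ∑ y, W x y * (u' x * v y) + ∑ x, ∑ y, W x y * (u' x * v' y) := by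
  simp only [← Finset.sum_add_distrib]
  refine Finset.sum_congr rfl fun x _ => Finset.sum_congr rfl fun y _ => by ring

private lemma prod_kernel_rowsum {Y : Type*} [Fintype Y] {n : ℕ} (G : Fin n → Y → Y → ℝ)
    (r : Fin n → ℝ) (hG : ∀ i a, ∑ b, G i a b = r i) (x : Fin n → Y) :
    ∑ y : Fin n → Y, ∏ i, G i (x i) (y i) = ∏ i, r i := by
  rw [← Fintype.prod_sum]
  exact Finset.prod_congr rfl fun i _ => hG i (x i)

private lemma reshape {Y : Type*} [Fintype Y] {n : ℕ} (G : Fin (n+1) → Y → Y → ℝ)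
    (u v : (Fin (n+1) → Y) → ℝ) :
    ∑ x, ∑ y, (∏ i, G i (x i) (y i)) * (u x * v y)
      = ∑ a, ∑ b, G 0 a b *
          ∑ x', ∑ y', (∏ i : Fin n, G i.succ (x' i) (y' i)) *
            (u (Fin.cons a x') * v (Fin.cons b y')) := by
  rw [sum_pi_succ (fun x => ∑ y, (∏ i, G i (x i) (y i)) * (u x * v y))]
  refine Finset.sum_congr rfl fun a _ => ?_
  have inner : ∀ x' : Fin n → Y,
      ∑ y : Fin (n+1) → Y, (∏ i, G i ((Fin.cons a x' : Fin (n+1) → Y) i) (y i)) * (u (Fin.cons a x') * v y)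
        = ∑ b, ∑ y' : Fin n → Y, (G 0 a b * ∏ i : Fin n, G i.succ (x' i) (y' i)) *
            (u (Fin.cons a x') * v (Fin.cons b y')) := by
    intro x'
    rw [sum_pi_succ (fun y => (∏ i, G i ((Fin.cons a x' : Fin (n+1) → Y) i) (y i)) * (u (Fin.cons a x') * v y))]
    refine Finset.sum_congr rfl fun b _ => Finset.sum_congr rfl fun y' _ => ?_
    congr 1
    rw [Fin.prod_univ_succ]
    simp [Fin.cons_zero, Fin.cons_succ]
  simp only [inner]
  rw [Finset.sum_comm]
  refine Finset.sum_congr rfl fun b _ => ?_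
  rw [Finset.mul_sum]
  refine Finset.sum_congr rfl fun x' _ => ?_
  rw [Finset.mul_sum]
  exact Finset.sum_congr rfl fun y' _ => by ring
private lemma step_psd {Y X : Type*} [Fintype Y] [Fintype X]
    (c : ℝ) (hc : 0 ≤ c⁻¹)
    (L : Y → Y → ℝ) (hLsym : ∀ a b, L a b = L b a) (W : X → X → ℝ)
    (hWpsd : ∀ u : X → ℝ, 0 ≤ ∑ x, ∑ y, W x y * (u x * u y))
    (H : Y → X → ℝ) :
    0 ≤ ∑ a, ∑ b, (c⁻¹ * ∑ z, L a z * L z b) *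
        ∑ x, ∑ y, W x y * (H a x * H b y) := by
  have hfac : ∀ a b : Y, (∑ z, L a z * L z b) = ∑ z, L a z * L b z :=
    fun a b => Finset.sum_congr rfl fun z _ => by rw [hLsym z b]
  simp only [hfac]
  have expand : ∀ a b : Y, (c⁻¹ * ∑ z, L a z * L b z) * (∑ x, ∑ y, W x y * (H a x * H b y))
      = ∑ z, c⁻¹ * ((L a z * L b z) * ∑ x, ∑ y, W x y * (H a x * H b y)) := by
    intro a b
    rw [mul_assoc, Finset.sum_mul, Finset.mul_sum]
  simp only [expand]
  rw [sum_rotate]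
  have key : ∀ z : Y, c⁻¹ * (∑ x, ∑ y, W x y * ((∑ a, L a z * H a x) * (∑ b, L b z * H b y)))
      = ∑ a, ∑ b, c⁻¹ * ((L a z * L b z) * ∑ x, ∑ y, W x y * (H a x * H b y)) := by
    intro z
    rw [bilin_left, Finset.mul_sum]
    refine Finset.sum_congr rfl fun a _ => ?_
    rw [bilin_right, Finset.mul_sum, Finset.mul_sum]
    exact Finset.sum_congr rfl fun b _ => by ring
  refine Finset.sum_nonneg fun z _ => ?_
  rw [← key z]
  exact mul_nonneg hc (hWpsd _)
private lemma step_gap {Y X : Type*} [Fintype Y] [Nonempty Y] [Fintype X]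
    (α ρ c : ℝ) (hc : 0 < c) (hcY : c = (Fintype.card Y : ℝ))
    (hρ : ρ * (Fintype.card X : ℝ) = 1)
    (K : Y → Y → ℝ) (hKsym : ∀ a b, K a b = K b a) (hKrow : ∀ a, ∑ b, K a b = 1)
    (hKlb : ∀ a b, α / c ≤ K a b) (hKnn : ∀ a b, 0 ≤ K a b)
    (W : X → X → ℝ) (hWsym : ∀ x y, W x y = W y x)
    (hWrow : ∀ x, ∑ y, W x y = ρ)
    (hWpsd : ∀ u : X → ℝ, 0 ≤ ∑ x, ∑ y, W x y * (u x * u y))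
    (hWgap : ∀ u : X → ℝ, ∑ x, u x = 0 →
      ∑ x, ∑ y, W x y * (u x * u y) ≤ (1 - α) * ρ * ∑ x, (u x) ^ 2)
    (H : Y → X → ℝ) (hH : ∑ a, ∑ x, H a x = 0) :
    ∑ a, ∑ b, (c⁻¹ * K a b) * (∑ x, ∑ y, W x y * (H a x * H b y))
      ≤ (1 - α) * (c⁻¹ * ρ) * ∑ a, ∑ x, (H a x) ^ 2 := by
  have hcinv : (0:ℝ) ≤ c⁻¹ := inv_nonneg.2 hc.le
  set m : Y → ℝ := fun a => ρ * ∑ x, H a x with hm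
  set g : Y → X → ℝ := fun a x => H a x - m a with hg
  have hWcol : ∀ y, ∑ x, W x y = ρ := fun y => by
    rw [Finset.sum_congr rfl fun x _ => hWsym x y]; exact hWrow y
  have hKcol : ∀ b, ∑ a, K a b = 1 := fun b => by
    rw [Finset.sum_congr rfl fun a _ => hKsym a b]; exact hKrow b
  -- sums of g vanish
  have hgsum : ∀ a, ∑ x, g a x = 0 := by
    intro a
    simp only [hg, Finset.sum_sub_distrib, Finset.sum_const, Finset.card_univ, nsmul_eq_mul, hm]
    have : (Fintype.card X : ℝ) * (ρ * ∑ x, H a x) = ∑ x, H a x := by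
      rw [← mul_assoc, mul_comm (Fintype.card X : ℝ) ρ, hρ, one_mul]
    rw [this, sub_self]
  have hmsum : ∑ a, m a = 0 := by
    simp only [hm, ← Finset.mul_sum, hH, mul_zero]
  -- constants against B
  have Bconst_right : ∀ (u : X → ℝ) (r : ℝ), ∑ x, ∑ y, W x y * (u x * r) = ρ * r * ∑ x, u x := by
    intro u r
    have h1 : ∀ x, ∑ y, W x y * (u x * r) = ρ * r * u x := by
      intro x
      rw [← Finset.sum_mul, hWrow x]; ring
    simp only [h1, ← Finset.mul_sum]
  have Bconst_left : ∀ (v : X → ℝ) (r : ℝ), ∑ x, ∑ y, W x y * (r * v y) = ρ * r * ∑ y, v y := by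
    intro v r
    rw [Finset.sum_comm]
    have h1 : ∀ y, ∑ x, W x y * (r * v y) = ρ * r * v y := by
      intro y
      rw [← Finset.sum_mul, hWcol y]; ring
    simp only [h1, ← Finset.mul_sum]
  -- decomposition of the bilinear form
  have Bdecomp : ∀ a b : Y, ∑ x, ∑ y, W x y * (H a x * H b y)
      = m a * m b + ∑ x, ∑ y, W x y * (g a x * g b y) := by
    intro a b
    have hH' : ∀ x y : X, W x y * (H a x * H b y)
        = W x y * (g a x * g b y) + W x y * (g a x * m b)
          + W x y * (m a * g b y) + W x y * (m a * m b) := by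
      intro x y
      simp only [hg]; ring
    rw [Finset.sum_congr rfl fun x _ => Finset.sum_congr rfl fun y _ => hH' x y]
    simp only [Finset.sum_add_distrib]
    rw [Bconst_right (g a) (m b), Bconst_left (g b) (m a), Bconst_right (fun _ => m a) (m b),
      hgsum a, hgsum b]
    have : ∑ x : X, m a = (Fintype.card X : ℝ) * m a := by
      rw [Finset.sum_const, Finset.card_univ, nsmul_eq_mul]
    rw [this]
    have : ρ * m b * ((Fintype.card X : ℝ) * m a) = m a * m b := by
      have h2 : ρ * (Fintype.card X : ℝ) = 1 := hρ
      calc ρ * m b * ((Fintype.card X : ℝ) * m a) = (ρ * (Fintype.card X : ℝ)) * (m a * m b) := by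
            ring
        _ = m a * m b := by rw [h2, one_mul]
    rw [this]
    ring
  simp only [Bdecomp]
  -- split into two sums
  have split : ∑ a, ∑ b, (c⁻¹ * K a b) * (m a * m b + ∑ x, ∑ y, W x y * (g a x * g b y))
      = (∑ a, ∑ b, (c⁻¹ * K a b) * (m a * m b))
        + ∑ a, ∑ b, (c⁻¹ * K a b) * ∑ x, ∑ y, W x y * (g a x * g b y) := by
    simp only [mul_add, Finset.sum_add_distrib]
  rw [split]
  -- term 1
  have T1 : ∑ a, ∑ b, (c⁻¹ * K a b) * (m a * m b) ≤ c⁻¹ * ((1 - α) * ∑ a, (m a) ^ 2) := by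
    have e1 : ∑ a, ∑ b, (c⁻¹ * K a b) * (m a * m b) = c⁻¹ * ∑ a, ∑ b, K a b * m a * m b := by
      rw [Finset.mul_sum]
      refine Finset.sum_congr rfl fun a _ => ?_
      rw [Finset.mul_sum]
      exact Finset.sum_congr rfl fun b _ => by ring
    rw [e1]
    refine mul_le_mul_of_nonneg_left ?_ hcinv
    have := single_gap (α := α) K hKsym hKrow (by rw [← hcY]; exact hKlb) m hmsum
    exact this
  -- symmetry of B
  have Bsym : ∀ u v : X → ℝ, ∑ x, ∑ y, W x y * (u x * v y) = ∑ x, ∑ y, W x y * (v x * u y) := by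
    intro u v
    rw [Finset.sum_comm]
    refine Finset.sum_congr rfl fun p _ => Finset.sum_congr rfl fun q _ => ?_
    rw [hWsym]; ring
  -- PSD Cauchy–Schwarz style bound
  have hB2 : ∀ a b : Y, ∑ x, ∑ y, W x y * (g a x * g b y)
      ≤ ((∑ x, ∑ y, W x y * (g a x * g a y)) + ∑ x, ∑ y, W x y * (g b x * g b y)) / 2 := by
    intro a b
    have h0 := hWpsd (fun x => g a x - g b x)
    have hexp : ∑ x, ∑ y, W x y * ((g a x - g b x) * (g a y - g b y))
        = ∑ x, ∑ y, W x y * (g a x * g a y) - ∑ x, ∑ y, W x y * (g a x * g b y)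
          - ∑ x, ∑ y, W x y * (g b x * g a y) + ∑ x, ∑ y, W x y * (g b x * g b y) := by
      have e : ∀ x y : X, W x y * ((g a x - g b x) * (g a y - g b y))
          = W x y * (g a x * g a y) - W x y * (g a x * g b y)
            - W x y * (g b x * g a y) + W x y * (g b x * g b y) := fun x y => by ring
      rw [Finset.sum_congr rfl fun x _ => Finset.sum_congr rfl fun y _ => e x y]
      simp only [Finset.sum_add_distrib, Finset.sum_sub_distrib]
    rw [hexp] at h0
    have hswap : ∑ x, ∑ y, W x y * (g b x * g a y) = ∑ x, ∑ y, W x y * (g a x * g b y) :=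
      Bsym (g b) (g a)
    linarith
  -- term 2
  have T2 : ∑ a, ∑ b, (c⁻¹ * K a b) * ∑ x, ∑ y, W x y * (g a x * g b y)
      ≤ c⁻¹ * ∑ a, ∑ x, ∑ y, W x y * (g a x * g a y) := by
    have step1 : ∑ a, ∑ b, (c⁻¹ * K a b) * ∑ x, ∑ y, W x y * (g a x * g b y)
        ≤ ∑ a, ∑ b, (c⁻¹ * K a b) *
            (((∑ x, ∑ y, W x y * (g a x * g a y)) + ∑ x, ∑ y, W x y * (g b x * g b y)) / 2) := by
      refine Finset.sum_le_sum fun a _ => Finset.sum_le_sum fun b _ => ?_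
      exact mul_le_mul_of_nonneg_left (hB2 a b) (mul_nonneg hcinv (hKnn a b))
    refine step1.trans (le_of_eq ?_)
    have e : ∀ a b : Y, (c⁻¹ * K a b) *
        (((∑ x, ∑ y, W x y * (g a x * g a y)) + ∑ x, ∑ y, W x y * (g b x * g b y)) / 2)
        = K a b * (c⁻¹ * (∑ x, ∑ y, W x y * (g a x * g a y)) / 2)
          + K a b * (c⁻¹ * (∑ x, ∑ y, W x y * (g b x * g b y)) / 2) := fun a b => by ring
    simp only [e, Finset.sum_add_distrib]
    have t1 : ∀ a : Y, ∑ b, K a b * (c⁻¹ * (∑ x, ∑ y, W x y * (g a x * g a y)) / 2)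
        = c⁻¹ * (∑ x, ∑ y, W x y * (g a x * g a y)) / 2 := by
      intro a
      rw [← Finset.sum_mul, hKrow a, one_mul]
    have t2 : ∑ a, ∑ b, K a b * (c⁻¹ * (∑ x, ∑ y, W x y * (g b x * g b y)) / 2)
        = ∑ b, c⁻¹ * (∑ x, ∑ y, W x y * (g b x * g b y)) / 2 := by
      rw [Finset.sum_comm]
      refine Finset.sum_congr rfl fun b _ => ?_
      rw [← Finset.sum_mul, hKcol b, one_mul]
    simp only [t1, t2]
    rw [← Finset.sum_add_distrib, Finset.mul_sum]
    exact Finset.sum_congr rfl fun a _ => by ring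
  -- bound the diagonal terms by the gap hypothesis
  have T3 : c⁻¹ * ∑ a, ∑ x, ∑ y, W x y * (g a x * g a y)
      ≤ c⁻¹ * ∑ a, (1 - α) * ρ * ∑ x, (g a x) ^ 2 := by
    refine mul_le_mul_of_nonneg_left ?_ hcinv
    exact Finset.sum_le_sum fun a _ => hWgap (g a) (hgsum a)
  -- Pythagoras
  have pyth : ∑ a, ∑ x, (H a x) ^ 2
      = (∑ a, ∑ x, (g a x) ^ 2) + (Fintype.card X : ℝ) * ∑ a, (m a) ^ 2 := by
    have e : ∀ a : Y, ∑ x, (H a x) ^ 2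
        = (∑ x, (g a x) ^ 2) + (Fintype.card X : ℝ) * (m a) ^ 2 := by
      intro a
      have e1 : ∀ x : X, (H a x) ^ 2 = (g a x) ^ 2 + 2 * m a * g a x + (m a) ^ 2 := by
        intro x; simp only [hg]; ring
      rw [Finset.sum_congr rfl fun x _ => e1 x]
      simp only [Finset.sum_add_distrib, ← Finset.mul_sum, hgsum a, mul_zero,
        Finset.sum_const, Finset.card_univ, nsmul_eq_mul]
      ring
    rw [Finset.sum_congr rfl fun a _ => e a, Finset.sum_add_distrib, ← Finset.mul_sum]
  -- final arithmetic
  have final : c⁻¹ * ((1 - α) * ∑ a, (m a) ^ 2) + c⁻¹ * ∑ a, (1 - α) * ρ * ∑ x, (g a x) ^ 2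
      = (1 - α) * (c⁻¹ * ρ) * ∑ a, ∑ x, (H a x) ^ 2 := by
    rw [pyth]
    have e2 : ∑ a, (1 - α) * ρ * ∑ x, (g a x) ^ 2 = (1 - α) * ρ * ∑ a, ∑ x, (g a x) ^ 2 := by
      rw [Finset.mul_sum]
    rw [e2]
    have h2 : ρ * (Fintype.card X : ℝ) = 1 := hρ
    calc c⁻¹ * ((1 - α) * ∑ a, (m a) ^ 2) + c⁻¹ * ((1 - α) * ρ * ∑ a, ∑ x, (g a x) ^ 2)
        = (1 - α) * (c⁻¹ * ρ) * (∑ a, ∑ x, (g a x) ^ 2)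
          + (1 - α) * c⁻¹ * (∑ a, (m a) ^ 2) := by ring
      _ = (1 - α) * (c⁻¹ * ρ) * (∑ a, ∑ x, (g a x) ^ 2)
          + (1 - α) * (c⁻¹ * ρ) * ((Fintype.card X : ℝ) * ∑ a, (m a) ^ 2) := by
          have : (1 - α) * (c⁻¹ * ρ) * ((Fintype.card X : ℝ) * ∑ a, (m a) ^ 2)
              = (1 - α) * c⁻¹ * (∑ a, (m a) ^ 2) * (ρ * (Fintype.card X : ℝ)) := by ring
          rw [this, h2, mul_one]
      _ = (1 - α) * (c⁻¹ * ρ) * ((∑ a, ∑ x, (g a x) ^ 2)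
          + (Fintype.card X : ℝ) * ∑ a, (m a) ^ 2) := by ring
  linarith
set_option maxHeartbeats 2000000 in
private lemma tensor_psd_gap {Y : Type*} [Fintype Y] [Nonempty Y] {t : ℕ}
    (M : Fin t → Y → Y → ℝ)
    (hsymm : ∀ k x y, M k x y = M k y x)
    (hnn : ∀ k x y, 0 ≤ M k x y) (hrow : ∀ k x, ∑ y, M k x y = 1)
    (α : ℝ) (hα : ∀ k a b, α / (Fintype.card Y : ℝ) ≤ ∑ z, M k a z * M k z b) :
    ∀ (n : ℕ) (ψ : Fin n → Fin t),
      (∀ h : (Fin n → Y) → ℝ, 0 ≤ ∑ x, ∑ y,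
          (∏ i, ((Fintype.card Y : ℝ))⁻¹ * ∑ z, M (ψ i) (x i) z * M (ψ i) z (y i))
            * (h x * h y)) ∧
      (∀ h : (Fin n → Y) → ℝ, ∑ x, h x = 0 →
        ∑ x, ∑ y,
          (∏ i, ((Fintype.card Y : ℝ))⁻¹ * ∑ z, M (ψ i) (x i) z * M (ψ i) z (y i))
            * (h x * h y)
          ≤ (1 - α) * (((Fintype.card Y : ℝ))⁻¹) ^ n * ∑ x, (h x) ^ 2) := by
  have hc : (0:ℝ) < (Fintype.card Y : ℝ) := by exact_mod_cast Fintype.card_pos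
  have hcinv : (0:ℝ) ≤ ((Fintype.card Y : ℝ))⁻¹ := inv_nonneg.2 hc.le
  have hKrow : ∀ (k : Fin t) a, ∑ b, (∑ z, M k a z * M k z b) = 1 := by
    intro k a
    rw [Finset.sum_comm]
    have e : ∀ z, ∑ b, M k a z * M k z b = M k a z := by
      intro z; rw [← Finset.mul_sum, hrow, mul_one]
    rw [Finset.sum_congr rfl fun z _ => e z]
    exact hrow k a
  have hKsym : ∀ (k : Fin t) a b, (∑ z, M k a z * M k z b) = ∑ z, M k b z * M k z a := by
    intro k a b
    refine Finset.sum_congr rfl fun z _ => ?_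
    rw [hsymm k a z, hsymm k z b]; ring
  have hKnn : ∀ (k : Fin t) a b, 0 ≤ ∑ z, M k a z * M k z b := fun k a b =>
    Finset.sum_nonneg fun z _ => mul_nonneg (hnn _ _ _) (hnn _ _ _)
  intro n
  induction n with
  | zero =>
    intro ψ
    constructor
    · intro h
      simp only [Fin.prod_univ_zero, one_mul]
      rw [← Finset.sum_mul_sum]
      exact mul_self_nonneg _
    · intro h hsum
      have hx : ∀ x : Fin 0 → Y, h x = 0 := by
        intro x
        have h1 : ∑ x : Fin 0 → Y, h x = h x := Fintype.sum_eq_single x fun y hy =>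
          absurd (Subsingleton.elim y x) hy
        rw [h1] at hsum; exact hsum
      simp [hx]
  | succ n IH =>
    intro ψ
    obtain ⟨IHpsd, IHgap⟩ := IH fun i => ψ i.succ
    have hρ : (((Fintype.card Y : ℝ))⁻¹) ^ n * (Fintype.card (Fin n → Y) : ℝ) = 1 := by
      have : (Fintype.card (Fin n → Y) : ℝ) = ((Fintype.card Y : ℝ)) ^ n := by
        rw [Fintype.card_fun, Fintype.card_fin]; push_cast; ring
      rw [this, ← mul_pow, inv_mul_cancel₀ (ne_of_gt hc), one_pow]
    constructor
    · intro h
      rw [reshape (fun i a b => ((Fintype.card Y : ℝ))⁻¹ * ∑ z, M (ψ i) a z * M (ψ i) z b) h h]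
      exact step_psd (Fintype.card Y : ℝ) hcinv (M (ψ 0)) (hsymm (ψ 0)) _
        (fun u => IHpsd u) _
    · intro h hsum
      rw [reshape (fun i a b => ((Fintype.card Y : ℝ))⁻¹ * ∑ z, M (ψ i) a z * M (ψ i) z b) h h]
      have hH : ∑ a, ∑ x' : Fin n → Y, h (Fin.cons a x') = 0 := by
        rw [← sum_pi_succ]; exact hsum
      have main := step_gap α ((((Fintype.card Y : ℝ))⁻¹) ^ n) (Fintype.card Y : ℝ) hc rfl hρ
        (fun a b => ∑ z, M (ψ 0) a z * M (ψ 0) z b) (hKsym (ψ 0)) (hKrow (ψ 0))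
        (hα (ψ 0)) (hKnn (ψ 0))
        (fun x' y' => ∏ i : Fin n,
          ((Fintype.card Y : ℝ))⁻¹ * ∑ z, M (ψ i.succ) (x' i) z * M (ψ i.succ) z (y' i))
        (fun x' y' => Finset.prod_congr rfl fun i _ => by rw [hKsym (ψ i.succ) (x' i) (y' i)])
        (fun x' => prod_kernel_rowsum
          (fun i a b => ((Fintype.card Y : ℝ))⁻¹ * ∑ z, M (ψ i.succ) a z * M (ψ i.succ) z b)
          (fun _ => ((Fintype.card Y : ℝ))⁻¹)
          (fun i a => by rw [← Finset.mul_sum, hKrow, mul_one]) x' |>.trans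
          (by rw [Finset.prod_const, Finset.card_univ, Fintype.card_fin]))
        (fun u => IHpsd u) (fun u hu => IHgap u hu)
        (fun a x' => h (Fin.cons a x')) hH
      refine le_trans main (le_of_eq ?_)
      rw [sum_pi_succ (fun x => h x ^ 2), pow_succ]
      ring
private lemma indicator_triangle {Aty Bty : Type*} (f : Aty → Bty) (x y z : Aty) :
    (if f x ≠ f y then (1:ℝ) else 0)
      ≤ (if f x ≠ f z then (1:ℝ) else 0) + (if f z ≠ f y then (1:ℝ) else 0) := by
  have hA : ∀ (P : Prop) [Decidable P], (0:ℝ) ≤ if P then (1:ℝ) else 0 := fun P _ => by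
    split <;> norm_num
  by_cases h3 : f x = f y
  · simp only [ne_eq, h3, not_true_eq_false, if_false]
    exact add_nonneg (hA _) (hA _)
  · simp only [ne_eq, h3, not_false_eq_true, if_true]
    by_cases h1 : f x = f z
    · have h2 : ¬ f z = f y := fun h => h3 (h1.trans h)
      rw [if_pos h2]
      linarith [hA (¬f x = f z)]
    · rw [if_pos h1]
      linarith [hA (¬f z = f y)]

private lemma twostep_abstract {X Γ : Type*} [Fintype X] (ρ κ : ℝ) (w : X → X → ℝ)
    (hwnn : ∀ x y, 0 ≤ w x y) (hwrow : ∀ x, ∑ y, w x y = ρ) (hwcol : ∀ y, ∑ x, w x y = ρ)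
    (hκ : 0 ≤ κ) (hκρ : κ * ρ = 1) (f : X → Γ) :
    ∑ x, ∑ y, (κ * ∑ z, w x z * w z y) * (if f x ≠ f y then (1:ℝ) else 0)
      ≤ 2 * ∑ x, ∑ y, w x y * (if f x ≠ f y then (1:ℝ) else 0) := by
  classical
  have e1 : ∀ x y : X, (κ * ∑ z, w x z * w z y) * (if f x ≠ f y then (1:ℝ) else 0)
      = ∑ z, κ * ((w x z * w z y) * (if f x ≠ f y then (1:ℝ) else 0)) := by
    intro x y
    rw [mul_assoc, Finset.sum_mul, Finset.mul_sum]
  simp only [e1]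
  have step1 : ∀ x y z : X, κ * ((w x z * w z y) * (if f x ≠ f y then (1:ℝ) else 0))
      ≤ κ * ((w x z * w z y) * (if f x ≠ f z then (1:ℝ) else 0))
        + κ * ((w x z * w z y) * (if f z ≠ f y then (1:ℝ) else 0)) := by
    intro x y z
    have := indicator_triangle f x y z
    have h2 : 0 ≤ κ * (w x z * w z y) := mul_nonneg hκ (mul_nonneg (hwnn _ _) (hwnn _ _))
    nlinarith
  have step2 : ∑ x, ∑ y, ∑ z, κ * ((w x z * w z y) * (if f x ≠ f y then (1:ℝ) else 0))
      ≤ (∑ x, ∑ y, ∑ z, κ * ((w x z * w z y) * (if f x ≠ f z then (1:ℝ) else 0)))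
        + ∑ x, ∑ y, ∑ z, κ * ((w x z * w z y) * (if f z ≠ f y then (1:ℝ) else 0)) := by
    simp only [← Finset.sum_add_distrib]
    exact Finset.sum_le_sum fun x _ => Finset.sum_le_sum fun y _ =>
      Finset.sum_le_sum fun z _ => step1 x y z
  refine step2.trans (le_of_eq ?_)
  have piece1 : ∑ x, ∑ y, ∑ z, κ * ((w x z * w z y) * (if f x ≠ f z then (1:ℝ) else 0))
      = ∑ x, ∑ z, w x z * (if f x ≠ f z then (1:ℝ) else 0) := by
    refine Finset.sum_congr rfl fun x _ => ?_
    rw [Finset.sum_comm]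
    have e2 : ∀ z : X, ∑ y, κ * ((w x z * w z y) * (if f x ≠ f z then (1:ℝ) else 0))
        = w x z * (if f x ≠ f z then (1:ℝ) else 0) := by
      intro z
      have e3 : ∀ y : X, κ * ((w x z * w z y) * (if f x ≠ f z then (1:ℝ) else 0))
          = (κ * (w x z * (if f x ≠ f z then (1:ℝ) else 0))) * w z y := fun y => by ring
      rw [Finset.sum_congr rfl fun y _ => e3 y, ← Finset.mul_sum, hwrow z]
      have : κ * (w x z * (if f x ≠ f z then (1:ℝ) else 0)) * ρ
          = (κ * ρ) * (w x z * (if f x ≠ f z then (1:ℝ) else 0)) := by ring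
      rw [this, hκρ, one_mul]
    exact Finset.sum_congr rfl fun z _ => e2 z
  have piece2 : ∑ x, ∑ y, ∑ z, κ * ((w x z * w z y) * (if f z ≠ f y then (1:ℝ) else 0))
      = ∑ z, ∑ y, w z y * (if f z ≠ f y then (1:ℝ) else 0) := by
    rw [sum_rotate]
    refine Finset.sum_congr rfl fun z _ => ?_
    have e2 : ∀ x : X, ∑ y, κ * ((w x z * w z y) * (if f z ≠ f y then (1:ℝ) else 0))
        = (κ * w x z) * ∑ y, w z y * (if f z ≠ f y then (1:ℝ) else 0) := by
      intro x
      rw [Finset.mul_sum]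
      exact Finset.sum_congr rfl fun y _ => by ring
    rw [Finset.sum_congr rfl fun x _ => e2 x, ← Finset.sum_mul, ← Finset.mul_sum, hwcol z,
      hκρ, one_mul]
  rw [piece1, piece2]
  ring
private lemma close_to_constant {X Γ : Type*} [Fintype X] [Nonempty X] [Fintype Γ]
    (α ρ : ℝ) (hα : 0 < α)
    (W : X → X → ℝ) (hWrow : ∀ x, ∑ y, W x y = ρ) (hWcol : ∀ y, ∑ x, W x y = ρ)
    (hρcard : ρ * (Fintype.card X : ℝ) = 1)
    (hgap : ∀ h : X → ℝ, ∑ x, h x = 0 →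
      ∑ x, ∑ y, W x y * (h x * h y) ≤ (1 - α) * ρ * ∑ x, (h x) ^ 2)
    (f : X → Γ) :
    ∃ σ : Γ, α * ∑ x, ρ * (if f x ≠ σ then (1:ℝ) else 0)
      ≤ ∑ x, ∑ y, W x y * (if f x ≠ f y then (1:ℝ) else 0) := by
  classical
  have hX : (0:ℝ) < (Fintype.card X : ℝ) := by exact_mod_cast Fintype.card_pos
  have hρ : ρ = 1 / (Fintype.card X : ℝ) := (eq_div_iff hX.ne').mpr hρcard
  have hρpos : 0 < ρ := by rw [hρ]; positivity
  set P : Γ → ℝ := fun σ => ∑ x, (if f x = σ then (1:ℝ) else 0) with hP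
  have hind01 : ∀ (Q : Prop) [Decidable Q], (0:ℝ) ≤ if Q then (1:ℝ) else 0 := fun Q _ => by
    split <;> norm_num
  have hPnn : ∀ σ, 0 ≤ P σ := fun σ => Finset.sum_nonneg fun x _ => hind01 _
  have hsumσ : ∀ x : X, ∑ σ, (if f x = σ then (1:ℝ) else 0) = 1 := by
    intro x
    rw [Finset.sum_ite_eq (Finset.univ) (f x) (fun _ => (1:ℝ)), if_pos (Finset.mem_univ _)]
  have hPsum : ∑ σ, P σ = (Fintype.card X : ℝ) := by
    rw [hP, Finset.sum_comm]
    rw [Finset.sum_congr rfl fun x _ => hsumσ x, Finset.sum_const, Finset.card_univ,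
      nsmul_eq_mul, mul_one]
  -- pointwise identity for the disagreement indicator
  have hagree : ∀ x y : X, ∑ σ, (if f x = σ then (1:ℝ) else 0) * (if f y = σ then 1 else 0)
      = if f x = f y then (1:ℝ) else 0 := by
    intro x y
    rw [Finset.sum_eq_single (f x)]
    · rw [if_pos rfl, one_mul]
      by_cases h : f x = f y
      · rw [if_pos (h ▸ rfl), if_pos h]
      · rw [if_neg (fun hh => h hh.symm), if_neg h]
    · intro b _ hb
      rw [if_neg (fun hh => hb hh.symm), zero_mul]
    · intro h; exact absurd (Finset.mem_univ _) h
  have hid : ∀ x y : X, (if f x ≠ f y then (1:ℝ) else 0)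
      = 1 - ∑ σ, (if f x = σ then (1:ℝ) else 0) * (if f y = σ then 1 else 0) := by
    intro x y
    rw [hagree x y]
    by_cases h : f x = f y
    · simp [h]
    · simp [h]
  -- total mass
  have htotal : ∑ x, ∑ y, W x y = (1:ℝ) := by
    rw [Finset.sum_congr rfl fun x _ => hWrow x, Finset.sum_const, Finset.card_univ,
      nsmul_eq_mul, mul_comm, hρcard]
  -- split the disagreement sum
  have hD : ∑ x, ∑ y, W x y * (if f x ≠ f y then (1:ℝ) else 0)
      = 1 - ∑ σ, ∑ x, ∑ y, W x y *
          ((if f x = σ then (1:ℝ) else 0) * (if f y = σ then 1 else 0)) := by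
    have e1 : ∀ x y : X, W x y * (if f x ≠ f y then (1:ℝ) else 0)
        = W x y - ∑ σ, W x y * ((if f x = σ then (1:ℝ) else 0) * (if f y = σ then 1 else 0)) := by
      intro x y
      rw [hid x y, mul_sub, mul_one, Finset.mul_sum]
    rw [Finset.sum_congr rfl fun x _ => Finset.sum_congr rfl fun y _ => e1 x y]
    simp only [Finset.sum_sub_distrib]
    rw [htotal, sum_rotate]
  -- constants against the bilinear form
  have Bconst_right : ∀ (u : X → ℝ) (r : ℝ), ∑ x, ∑ y, W x y * (u x * r) = ρ * r * ∑ x, u x := by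
    intro u r
    have h1 : ∀ x, ∑ y, W x y * (u x * r) = ρ * r * u x := by
      intro x
      rw [← Finset.sum_mul, hWrow x]; ring
    simp only [h1, ← Finset.mul_sum]
  have Bconst_left : ∀ (v : X → ℝ) (r : ℝ), ∑ x, ∑ y, W x y * (r * v y) = ρ * r * ∑ y, v y := by
    intro v r
    rw [Finset.sum_comm]
    have h1 : ∀ y, ∑ x, W x y * (r * v y) = ρ * r * v y := by
      intro y
      rw [← Finset.sum_mul, hWcol y]; ring
    simp only [h1, ← Finset.mul_sum]
  -- the per-colour quadratic bound
  have hQ : ∀ σ : Γ, ∑ x, ∑ y, W x y *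
        ((if f x = σ then (1:ℝ) else 0) * (if f y = σ then 1 else 0))
      ≤ ρ * P σ - α * (ρ * P σ - (ρ * P σ) ^ 2) := by
    intro σ
    set g : X → ℝ := fun x => if f x = σ then (1:ℝ) else 0 with hg
    set p : ℝ := ρ * P σ with hp
    set h : X → ℝ := fun x => g x - p with hh
    have hgsum : ∑ x, g x = P σ := rfl
    have hhsum : ∑ x, h x = 0 := by
      simp only [hh, Finset.sum_sub_distrib, hgsum, Finset.sum_const, Finset.card_univ,
        nsmul_eq_mul, hp]
      have : (Fintype.card X : ℝ) * (ρ * P σ) = P σ := by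
        rw [← mul_assoc, mul_comm (Fintype.card X : ℝ) ρ, hρcard, one_mul]
      rw [this, sub_self]
    -- decomposition
    have hdecomp : ∑ x, ∑ y, W x y * (g x * g y)
        = p ^ 2 + ∑ x, ∑ y, W x y * (h x * h y) := by
      have e : ∀ x y : X, W x y * (g x * g y)
          = W x y * (h x * h y) + W x y * (h x * p) + W x y * (p * h y) + W x y * (p * p) := by
        intro x y
        simp only [hh]; ring
      rw [Finset.sum_congr rfl fun x _ => Finset.sum_congr rfl fun y _ => e x y]
      simp only [Finset.sum_add_distrib]
      rw [Bconst_right h p, Bconst_left h p, Bconst_left (fun _ => p) p, hhsum]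
      have e2 : ∑ y : X, p = (Fintype.card X : ℝ) * p := by
        rw [Finset.sum_const, Finset.card_univ, nsmul_eq_mul]
      rw [e2]
      have e3 : ρ * p * ((Fintype.card X : ℝ) * p) = p ^ 2 := by
        calc ρ * p * ((Fintype.card X : ℝ) * p) = (ρ * (Fintype.card X : ℝ)) * p ^ 2 := by ring
          _ = p ^ 2 := by rw [hρcard, one_mul]
      rw [e3]
      ring
    have hsq : ∀ x : X, (g x) ^ 2 = g x := by
      intro x
      simp only [hg]
      split <;> norm_num
    have hsum2 : ∑ x, (h x) ^ 2 = P σ - (Fintype.card X : ℝ) * p ^ 2 := by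
      have e : ∀ x : X, (h x) ^ 2 = g x - 2 * p * g x + p ^ 2 := by
        intro x
        have := hsq x
        simp only [hh]
        nlinarith [hsq x]
      rw [Finset.sum_congr rfl fun x _ => e x]
      simp only [Finset.sum_add_distrib, Finset.sum_sub_distrib, ← Finset.mul_sum, hgsum,
        Finset.sum_const, Finset.card_univ, nsmul_eq_mul]
      have hPp : 2 * p * P σ = 2 * (Fintype.card X : ℝ) * p ^ 2 := by
        have : P σ = (Fintype.card X : ℝ) * p := by
          rw [hp, ← mul_assoc, mul_comm (Fintype.card X : ℝ) ρ, hρcard, one_mul]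
        rw [this]; ring
      rw [hPp]; ring
    have hgapb := hgap h hhsum
    rw [hsum2] at hgapb
    have hρsum : (1 - α) * ρ * (P σ - (Fintype.card X : ℝ) * p ^ 2) = (1 - α) * (p - p ^ 2) := by
      have e1 : ρ * P σ = p := hp.symm
      have e2 : ρ * ((Fintype.card X : ℝ) * p ^ 2) = p ^ 2 := by
        rw [← mul_assoc, hρcard, one_mul]
      calc (1 - α) * ρ * (P σ - (Fintype.card X : ℝ) * p ^ 2)
          = (1 - α) * (ρ * P σ - ρ * ((Fintype.card X : ℝ) * p ^ 2)) := by ring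
        _ = (1 - α) * (p - p ^ 2) := by rw [e1, e2]
    rw [hρsum] at hgapb
    have : ∑ x, ∑ y, W x y * (g x * g y) ≤ p ^ 2 + (1 - α) * (p - p ^ 2) := by
      rw [hdecomp]; linarith
    calc ∑ x, ∑ y, W x y * ((if f x = σ then (1:ℝ) else 0) * (if f y = σ then 1 else 0))
        = ∑ x, ∑ y, W x y * (g x * g y) := rfl
      _ ≤ p ^ 2 + (1 - α) * (p - p ^ 2) := this
      _ = ρ * P σ - α * (ρ * P σ - (ρ * P σ) ^ 2) := by rw [← hp]; ring
  -- choose the majority colour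
  have hΓ : Nonempty Γ := ⟨f (Classical.arbitrary X)⟩
  obtain ⟨σ, -, hσ⟩ := Finset.exists_max_image (Finset.univ : Finset Γ) P
    ⟨f (Classical.arbitrary X), Finset.mem_univ _⟩
  refine ⟨σ, ?_⟩
  have hpsum : ∑ τ, ρ * P τ = 1 := by
    rw [← Finset.mul_sum, hPsum, hρcard]
  have hpmax : ∀ τ : Γ, ρ * P τ ≤ ρ * P σ := fun τ =>
    mul_le_mul_of_nonneg_left (hσ τ (Finset.mem_univ _)) hρpos.le
  have hpnn : ∀ τ : Γ, 0 ≤ ρ * P τ := fun τ => mul_nonneg hρpos.le (hPnn τ)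
  -- lower bound on the sum of p(1-p)
  have hlow : 1 - ρ * P σ ≤ ∑ τ, (ρ * P τ - (ρ * P τ) ^ 2) := by
    have e : ∀ τ : Γ, (ρ * P τ) * (1 - ρ * P σ) ≤ ρ * P τ - (ρ * P τ) ^ 2 := by
      intro τ
      have h1 : (ρ * P τ) * (1 - ρ * P σ) ≤ (ρ * P τ) * (1 - ρ * P τ) := by
        refine mul_le_mul_of_nonneg_left ?_ (hpnn τ)
        linarith [hpmax τ]
      calc (ρ * P τ) * (1 - ρ * P σ) ≤ (ρ * P τ) * (1 - ρ * P τ) := h1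
        _ = ρ * P τ - (ρ * P τ) ^ 2 := by ring
    calc 1 - ρ * P σ = ∑ τ, (ρ * P τ) * (1 - ρ * P σ) := by
          rw [← Finset.sum_mul, hpsum, one_mul]
      _ ≤ ∑ τ, (ρ * P τ - (ρ * P τ) ^ 2) := Finset.sum_le_sum fun τ _ => e τ
  -- sum of Q over colours
  have hQsum : ∑ τ, ∑ x, ∑ y, W x y *
        ((if f x = τ then (1:ℝ) else 0) * (if f y = τ then 1 else 0))
      ≤ 1 - α * (1 - ρ * P σ) := by
    calc ∑ τ, ∑ x, ∑ y, W x y * ((if f x = τ then (1:ℝ) else 0) * (if f y = τ then 1 else 0))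
        ≤ ∑ τ, (ρ * P τ - α * (ρ * P τ - (ρ * P τ) ^ 2)) :=
          Finset.sum_le_sum fun τ _ => hQ τ
      _ = 1 - α * ∑ τ, (ρ * P τ - (ρ * P τ) ^ 2) := by
          rw [Finset.sum_sub_distrib, hpsum, ← Finset.mul_sum]
      _ ≤ 1 - α * (1 - ρ * P σ) := by nlinarith [hlow]
  -- conclude
  have hgoal : ∑ x, ρ * (if f x ≠ σ then (1:ℝ) else 0) = 1 - ρ * P σ := by
    have e : ∀ x : X, ρ * (if f x ≠ σ then (1:ℝ) else 0)
        = ρ - ρ * (if f x = σ then (1:ℝ) else 0) := by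
      intro x
      by_cases h : f x = σ
      · simp [h]
      · simp [h]
    rw [Finset.sum_congr rfl fun x _ => e x, Finset.sum_sub_distrib, Finset.sum_const,
      Finset.card_univ, nsmul_eq_mul, ← Finset.mul_sum, mul_comm ((Fintype.card X : ℕ) : ℝ) ρ,
      hρcard]
  rw [hgoal, hD]
  have := hQsum
  nlinarith [hQsum]

set_option maxHeartbeats 4000000 in
/-- **Agreement lemma for product chains.**  `M 1, …, M t` are symmetric bistochastic
matrices on the finite set `Y` with strictly positive entries; their stationary
distributions are uniform on `Y`.  For `ψ : [n] → [t]`, the distribution `M_ψ` on pairs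
samples each coordinate pair independently: `x_i` uniform and `y_i` with probability
`M_{ψ(i)}(x_i, y_i)`, and `μ_ψ` is the uniform (product of stationary) distribution on
`Y^n`.  If `f` agrees on a random edge of `M_ψ` with probability `1 − ε`, then `f` is
`Cε`-close to a constant. -/
theorem agreement_lemma_product_chains
    {Y Γ : Type*} [Fintype Y] [Nonempty Y] [Fintype Γ] (t : ℕ)
    (M : Fin t → Y → Y → ℝ)
    (hsymm : ∀ k x y, M k x y = M k y x)
    (hpos : ∀ k x y, 0 < M k x y)
    (hrow : ∀ k x, ∑ y, M k x y = 1) :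
    ∃ C > (0 : ℝ), ∀ (n : ℕ) (ψ : Fin n → Fin t) (f : (Fin n → Y) → Γ) (ε : ℝ),
      (∑ x : Fin n → Y, ∑ y : Fin n → Y,
        (∏ i, ((Fintype.card Y : ℝ))⁻¹ * M (ψ i) (x i) (y i)) *
        (if f x ≠ f y then 1 else 0)) ≤ ε →
      ∃ σ : Γ, ∑ x : Fin n → Y,
        (∏ _i : Fin n, ((Fintype.card Y : ℝ))⁻¹) * (if f x ≠ σ then 1 else 0) ≤ C * ε := by
  classical
  have hc : (0:ℝ) < (Fintype.card Y : ℝ) := by exact_mod_cast Fintype.card_pos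
  have hc' : (Fintype.card Y : ℝ) ≠ 0 := ne_of_gt hc
  have hnn : ∀ k x y, 0 ≤ M k x y := fun k x y => (hpos k x y).le
  -- choose α
  obtain ⟨α, hα0, hαlb⟩ : ∃ α : ℝ, 0 < α ∧
      ∀ k a b, α / (Fintype.card Y : ℝ) ≤ ∑ z, M k a z * M k z b := by
    rcases Nat.eq_zero_or_pos t with ht | ht
    · subst ht
      exact ⟨1, one_pos, fun k => k.elim0⟩
    · have hne : Nonempty (Fin t) := Fin.pos_iff_nonempty.mp ht
      have hne2 : (Finset.univ : Finset (Fin t × Y × Y)).Nonempty := Finset.univ_nonempty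
      set δ : ℝ := Finset.univ.inf' hne2 (fun p : Fin t × Y × Y => M p.1 p.2.1 p.2.2) with hδ
      have hδpos : 0 < δ := by
        rw [hδ, Finset.lt_inf'_iff]
        exact fun p _ => hpos _ _ _
      have hδle : ∀ k a b, δ ≤ M k a b := fun k a b =>
        Finset.inf'_le _ (Finset.mem_univ (k, a, b))
      refine ⟨(Fintype.card Y : ℝ) * δ, by positivity, fun k a b => ?_⟩
      have e1 : (Fintype.card Y : ℝ) * δ / (Fintype.card Y : ℝ) = δ := by field_simp
      rw [e1]
      calc δ = δ * ∑ z, M k a z := by rw [hrow, mul_one]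
        _ = ∑ z, δ * M k a z := Finset.mul_sum _ _ _
        _ ≤ ∑ z, M k a z * M k z b := by
            refine Finset.sum_le_sum fun z _ => ?_
            calc δ * M k a z = M k a z * δ := mul_comm _ _
              _ ≤ M k a z * M k z b := mul_le_mul_of_nonneg_left (hδle k z b) (hnn k a z)
  refine ⟨2 / α, by positivity, ?_⟩
  intro n ψ f ε hε
  -- facts about the one-step kernel w
  have hwnn : ∀ x y : Fin n → Y, 0 ≤ ∏ i, ((Fintype.card Y : ℝ))⁻¹ * M (ψ i) (x i) (y i) :=
    fun x y => Finset.prod_nonneg fun i _ => mul_nonneg (inv_nonneg.2 hc.le) (hnn _ _ _)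
  have hwrow : ∀ x : Fin n → Y,
      ∑ y : Fin n → Y, ∏ i, ((Fintype.card Y : ℝ))⁻¹ * M (ψ i) (x i) (y i)
        = (((Fintype.card Y : ℝ))⁻¹) ^ n := by
    intro x
    rw [prod_kernel_rowsum (fun i a b => ((Fintype.card Y : ℝ))⁻¹ * M (ψ i) a b)
      (fun _ => ((Fintype.card Y : ℝ))⁻¹)
      (fun i a => by rw [← Finset.mul_sum, hrow, mul_one]) x,
      Finset.prod_const, Finset.card_univ, Fintype.card_fin]
  have hwsym : ∀ x y : Fin n → Y,
      (∏ i, ((Fintype.card Y : ℝ))⁻¹ * M (ψ i) (x i) (y i))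
        = ∏ i, ((Fintype.card Y : ℝ))⁻¹ * M (ψ i) (y i) (x i) :=
    fun x y => Finset.prod_congr rfl fun i _ => by rw [hsymm (ψ i) (x i) (y i)]
  have hwcol : ∀ y : Fin n → Y,
      ∑ x : Fin n → Y, ∏ i, ((Fintype.card Y : ℝ))⁻¹ * M (ψ i) (x i) (y i)
        = (((Fintype.card Y : ℝ))⁻¹) ^ n := by
    intro y
    rw [Finset.sum_congr rfl fun x _ => hwsym x y]
    exact hwrow y
  -- facts about the two-step kernel
  have hKrow : ∀ (k : Fin t) a, ∑ b, (∑ z, M k a z * M k z b) = 1 := by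
    intro k a
    rw [Finset.sum_comm]
    have e : ∀ z, ∑ b, M k a z * M k z b = M k a z := by
      intro z; rw [← Finset.mul_sum, hrow, mul_one]
    rw [Finset.sum_congr rfl fun z _ => e z]
    exact hrow k a
  have hKsym : ∀ (k : Fin t) a b, (∑ z, M k a z * M k z b) = ∑ z, M k b z * M k z a := by
    intro k a b
    refine Finset.sum_congr rfl fun z _ => ?_
    rw [hsymm k a z, hsymm k z b]; ring
  have hWrow : ∀ x : Fin n → Y,
      ∑ y : Fin n → Y, ∏ i, ((Fintype.card Y : ℝ))⁻¹
          * ∑ z, M (ψ i) (x i) z * M (ψ i) z (y i)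
        = (((Fintype.card Y : ℝ))⁻¹) ^ n := by
    intro x
    rw [prod_kernel_rowsum
      (fun i a b => ((Fintype.card Y : ℝ))⁻¹ * ∑ z, M (ψ i) a z * M (ψ i) z b)
      (fun _ => ((Fintype.card Y : ℝ))⁻¹)
      (fun i a => by rw [← Finset.mul_sum, hKrow, mul_one]) x,
      Finset.prod_const, Finset.card_univ, Fintype.card_fin]
  have hWsym : ∀ x y : Fin n → Y,
      (∏ i, ((Fintype.card Y : ℝ))⁻¹ * ∑ z, M (ψ i) (x i) z * M (ψ i) z (y i))
        = ∏ i, ((Fintype.card Y : ℝ))⁻¹ * ∑ z, M (ψ i) (y i) z * M (ψ i) z (x i) :=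
    fun x y => Finset.prod_congr rfl fun i _ => by rw [hKsym (ψ i) (x i) (y i)]
  have hWcol : ∀ y : Fin n → Y,
      ∑ x : Fin n → Y, ∏ i, ((Fintype.card Y : ℝ))⁻¹
          * ∑ z, M (ψ i) (x i) z * M (ψ i) z (y i)
        = (((Fintype.card Y : ℝ))⁻¹) ^ n := by
    intro y
    rw [Finset.sum_congr rfl fun x _ => hWsym x y]
    exact hWrow y
  have hρcard : (((Fintype.card Y : ℝ))⁻¹) ^ n * (Fintype.card (Fin n → Y) : ℝ) = 1 := by
    have e : (Fintype.card (Fin n → Y) : ℝ) = ((Fintype.card Y : ℝ)) ^ n := by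
      rw [Fintype.card_fun, Fintype.card_fin]; push_cast; ring
    rw [e, ← mul_pow, inv_mul_cancel₀ hc', one_pow]
  -- the spectral gap of the two-step kernel
  have hgap := (tensor_psd_gap M hsymm hnn hrow α hαlb n ψ).2
  -- majority colour
  obtain ⟨σ, hσ⟩ := close_to_constant α ((((Fintype.card Y : ℝ))⁻¹) ^ n) hα0
    _ hWrow hWcol hρcard (fun h hh => hgap h hh) f
  refine ⟨σ, ?_⟩
  -- two-step disagreement is at most twice the one-step disagreement
  have kernel_id : ∀ x y : Fin n → Y,
      (∏ i, ((Fintype.card Y : ℝ))⁻¹ * ∑ z, M (ψ i) (x i) z * M (ψ i) z (y i))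
        = ((Fintype.card Y : ℝ)) ^ n * ∑ z : Fin n → Y,
            (∏ i, ((Fintype.card Y : ℝ))⁻¹ * M (ψ i) (x i) (z i))
              * ∏ i, ((Fintype.card Y : ℝ))⁻¹ * M (ψ i) (z i) (y i) := by
    intro x y
    have e1 : ∀ z : Fin n → Y,
        (∏ i, ((Fintype.card Y : ℝ))⁻¹ * M (ψ i) (x i) (z i))
            * ∏ i, ((Fintype.card Y : ℝ))⁻¹ * M (ψ i) (z i) (y i)
          = ∏ i, (((Fintype.card Y : ℝ))⁻¹ * M (ψ i) (x i) (z i))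
              * (((Fintype.card Y : ℝ))⁻¹ * M (ψ i) (z i) (y i)) :=
      fun z => (Finset.prod_mul_distrib).symm
    have e4 : ∑ z : Fin n → Y, ∏ i, (((Fintype.card Y : ℝ))⁻¹ * M (ψ i) (x i) (z i))
          * (((Fintype.card Y : ℝ))⁻¹ * M (ψ i) (z i) (y i))
        = ∏ i, ∑ b, (((Fintype.card Y : ℝ))⁻¹ * M (ψ i) (x i) b)
          * (((Fintype.card Y : ℝ))⁻¹ * M (ψ i) b (y i)) :=
      (Fintype.prod_sum (fun i b => (((Fintype.card Y : ℝ))⁻¹ * M (ψ i) (x i) b)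
        * (((Fintype.card Y : ℝ))⁻¹ * M (ψ i) b (y i)))).symm
    rw [Finset.sum_congr rfl fun z _ => e1 z, e4]
    have e2 : ((Fintype.card Y : ℝ)) ^ n = ∏ _i : Fin n, (Fintype.card Y : ℝ) := by
      rw [Finset.prod_const, Finset.card_univ, Fintype.card_fin]
    rw [e2, ← Finset.prod_mul_distrib]
    refine Finset.prod_congr rfl fun i _ => ?_
    have e3 : ∑ b, (((Fintype.card Y : ℝ))⁻¹ * M (ψ i) (x i) b)
        * (((Fintype.card Y : ℝ))⁻¹ * M (ψ i) b (y i))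
        = ((Fintype.card Y : ℝ))⁻¹ * (((Fintype.card Y : ℝ))⁻¹
            * ∑ z, M (ψ i) (x i) z * M (ψ i) z (y i)) := by
      rw [Finset.mul_sum, Finset.mul_sum]
      exact Finset.sum_congr rfl fun b _ => by ring
    rw [e3, ← mul_assoc, ← mul_assoc, mul_inv_cancel₀ hc', one_mul]
  have htwostep : ∑ x, ∑ y,
      (∏ i, ((Fintype.card Y : ℝ))⁻¹ * ∑ z, M (ψ i) (x i) z * M (ψ i) z (y i))
        * (if f x ≠ f y then (1:ℝ) else 0)
      ≤ 2 * ∑ x, ∑ y, (∏ i, ((Fintype.card Y : ℝ))⁻¹ * M (ψ i) (x i) (y i))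
        * (if f x ≠ f y then (1:ℝ) else 0) := by
    have e : ∀ x y : Fin n → Y,
        (∏ i, ((Fintype.card Y : ℝ))⁻¹ * ∑ z, M (ψ i) (x i) z * M (ψ i) z (y i))
            * (if f x ≠ f y then (1:ℝ) else 0)
          = (((Fintype.card Y : ℝ)) ^ n * ∑ z : Fin n → Y,
              (∏ i, ((Fintype.card Y : ℝ))⁻¹ * M (ψ i) (x i) (z i))
                * ∏ i, ((Fintype.card Y : ℝ))⁻¹ * M (ψ i) (z i) (y i))
            * (if f x ≠ f y then (1:ℝ) else 0) := by
      intro x y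
      rw [kernel_id x y]
    rw [Finset.sum_congr rfl fun x _ => Finset.sum_congr rfl fun y _ => e x y]
    exact twostep_abstract ((((Fintype.card Y : ℝ))⁻¹) ^ n) (((Fintype.card Y : ℝ)) ^ n)
      _ hwnn hwrow hwcol (by positivity)
      (by rw [← mul_pow, mul_inv_cancel₀ hc', one_pow]) f
  -- put everything together
  have hchain : α * ∑ x, (((Fintype.card Y : ℝ))⁻¹) ^ n * (if f x ≠ σ then (1:ℝ) else 0)
      ≤ 2 * ε := by
    calc α * ∑ x, (((Fintype.card Y : ℝ))⁻¹) ^ n * (if f x ≠ σ then (1:ℝ) else 0)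
        ≤ ∑ x, ∑ y, (∏ i, ((Fintype.card Y : ℝ))⁻¹
            * ∑ z, M (ψ i) (x i) z * M (ψ i) z (y i)) * (if f x ≠ f y then (1:ℝ) else 0) := hσ
      _ ≤ 2 * ∑ x, ∑ y, (∏ i, ((Fintype.card Y : ℝ))⁻¹ * M (ψ i) (x i) (y i))
            * (if f x ≠ f y then (1:ℝ) else 0) := htwostep
      _ ≤ 2 * ε := by linarith [hε]
  have hprodconst : (∏ _i : Fin n, ((Fintype.card Y : ℝ))⁻¹)
      = (((Fintype.card Y : ℝ))⁻¹) ^ n := by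
    rw [Finset.prod_const, Finset.card_univ, Fintype.card_fin]
  have egoal : ∑ x : Fin n → Y, (∏ _i : Fin n, ((Fintype.card Y : ℝ))⁻¹)
        * (if f x ≠ σ then (1:ℝ) else 0)
      = ∑ x, (((Fintype.card Y : ℝ))⁻¹) ^ n * (if f x ≠ σ then (1:ℝ) else 0) :=
    Finset.sum_congr rfl fun x _ => by rw [hprodconst]
  rw [egoal]
  have hfin : ∑ x, (((Fintype.card Y : ℝ))⁻¹) ^ n * (if f x ≠ σ then (1:ℝ) else 0)
      ≤ 2 * ε / α := by
    rw [le_div_iff₀ hα0]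
    linarith [hchain]
  refine le_trans hfin (le_of_eq (by ring))
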